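/- Let P, Q be probability measures on a measurable space X, both absolutely continuous w.r.t. a σ-finite measure μ with densities p, q. Suppose there exist 0 ≤ r₁ < 1 < r₂ such that q(x) > 0 and r₁ ≤ p(x)/q(x) ≤ r₂ for μ-a.e. x. Then for any convex f:(0,∞)→ℝ with f(1)=0, the f-divergence satisfies D_f(P‖Q) ≤ ((1−r₁)/(r₂−r₁))·f(r₂) + ((r₂−1)/(r₂−r₁))·f(r₁), where f(r₁) for r₁=0 is interpreted as lim_{x→0+} f(x) and the bound is trivially true if this limit is +∞. -/

import Mathlib

open MeasureTheory

theorem fDiv_upper_bound_of_density_ratio_bounded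
    {X : Type*} [MeasurableSpace X] (μ : Measure X) [SigmaFinite μ]
    (p q : X → ℝ) (hp : Measurable p) (hq : Measurable q)
    (hp0 : ∀ x, 0 ≤ p x)
    (hpint : Integrable p μ) (hqint : Integrable q μ)
    (hpi : ∫ x, p x ∂μ = 1) (hqi : ∫ x, q x ∂μ = 1)
    (r₁ r₂ : ℝ) (hr₁0 : 0 ≤ r₁) (hr₁ : r₁ < 1) (hr₂ : 1 < r₂)
    (hae : ∀ᵐ x ∂μ, 0 < q x ∧ r₁ ≤ p x / q x ∧ p x / q x ≤ r₂)
    (f : ℝ → ℝ) (hf : ConvexOn ℝ (Set.Ici 0) f) (hf1 : f 1 = 0)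
    (hf0 : Filter.Tendsto f (nhdsWithin 0 (Set.Ioi 0)) (nhds (f 0))) :
    ∫ x, q x * f (p x / q x) ∂μ ≤
      (1 - r₁) / (r₂ - r₁) * f r₂ + (r₂ - 1) / (r₂ - r₁) * f r₁ := by
  have hr21 : (0:ℝ) < r₂ - r₁ := by linarith
  have hr₁mem : r₁ ∈ Set.Ici (0:ℝ) := hr₁0
  have hr₂mem : r₂ ∈ Set.Ici (0:ℝ) := by simp only [Set.mem_Ici]; linarith
  -- chord bound
  have hchord : ∀ t ∈ Set.Icc r₁ r₂,
      f t ≤ (r₂ - t) / (r₂ - r₁) * f r₁ + (t - r₁) / (r₂ - r₁) * f r₂ := by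
    intro t ht
    have ha : 0 ≤ (r₂ - t) / (r₂ - r₁) := div_nonneg (by linarith [ht.2]) hr21.le
    have hb : 0 ≤ (t - r₁) / (r₂ - r₁) := div_nonneg (by linarith [ht.1]) hr21.le
    have hab : (r₂ - t) / (r₂ - r₁) + (t - r₁) / (r₂ - r₁) = 1 := by
      field_simp
      ring
    have key := hf.2 hr₁mem hr₂mem ha hb hab
    have ht' : ((r₂ - t) / (r₂ - r₁)) • r₁ + ((t - r₁) / (r₂ - r₁)) • r₂ = t := by
      simp only [smul_eq_mul]
      field_simp
      ring
    rw [ht'] at key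
    simpa using key
  -- boundedness of f on Icc r₁ r₂
  set s₀ := (f 1 - f r₁) / (1 - r₁) with hs₀
  set s₁ := (f r₂ - f 1) / (r₂ - 1) with hs₁
  set C := max (max |f r₁| |f r₂|) ((|s₀| + |s₁|) * (r₂ - r₁)) with hCdef
  have hC0 : 0 ≤ C := le_trans (abs_nonneg _) ((le_max_left _ _).trans (le_max_left _ _))
  have hBle : (|s₀| + |s₁|) * (r₂ - r₁) ≤ C := le_max_right _ _
  have hC : ∀ t ∈ Set.Icc r₁ r₂, |f t| ≤ C := by
    intro t ht
    obtain ⟨ht1, ht2⟩ := ht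
    have htmem : t ∈ Set.Ici (0:ℝ) := le_trans hr₁0 ht1
    rw [abs_le]
    constructor
    · rcases lt_trichotomy t 1 with h | h | h
      · have hsl := hf.slope_mono_adjacent htmem hr₂mem h hr₂
        have h1t : (0:ℝ) < 1 - t := by linarith
        have h2 : f 1 - f t ≤ s₁ * (1 - t) := by
          rw [hs₁]
          exact (div_le_iff₀ h1t).mp hsl
        have h3 : s₁ * (1 - t) ≤ |s₁| * (1 - t) :=
          mul_le_mul_of_nonneg_right (le_abs_self _) h1t.le
        have h4 : |s₁| * (1 - t) ≤ |s₁| * (r₂ - r₁) :=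
          mul_le_mul_of_nonneg_left (by linarith) (abs_nonneg _)
        have h5 : |s₁| * (r₂ - r₁) ≤ (|s₀| + |s₁|) * (r₂ - r₁) :=
          mul_le_mul_of_nonneg_right (by linarith [abs_nonneg s₀]) hr21.le
        linarith
      · rw [h, hf1]; linarith
      · have hsl := hf.slope_mono_adjacent hr₁mem htmem hr₁ h
        have ht1' : (0:ℝ) < t - 1 := by linarith
        have h2 : s₀ * (t - 1) ≤ f t - f 1 := by
          rw [hs₀] at *
          exact (le_div_iff₀ ht1').mp hsl
        have h3 : -|s₀| * (t - 1) ≤ s₀ * (t - 1) :=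
          mul_le_mul_of_nonneg_right (neg_abs_le _) ht1'.le
        have h4 : |s₀| * (t - 1) ≤ |s₀| * (r₂ - r₁) :=
          mul_le_mul_of_nonneg_left (by linarith) (abs_nonneg _)
        have h5 : |s₀| * (r₂ - r₁) ≤ (|s₀| + |s₁|) * (r₂ - r₁) :=
          mul_le_mul_of_nonneg_right (by linarith [abs_nonneg s₁]) hr21.le
        linarith
    · have h1 := hchord t ⟨ht1, ht2⟩
      have ha : 0 ≤ (r₂ - t) / (r₂ - r₁) := div_nonneg (by linarith) hr21.le
      have hb : 0 ≤ (t - r₁) / (r₂ - r₁) := div_nonneg (by linarith) hr21.le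
      have hab : (r₂ - t) / (r₂ - r₁) + (t - r₁) / (r₂ - r₁) = 1 := by field_simp; ring
      have hA : max |f r₁| |f r₂| ≤ C := le_max_left _ _
      have e1 : f r₁ ≤ max |f r₁| |f r₂| := (le_abs_self _).trans (le_max_left _ _)
      have e2 : f r₂ ≤ max |f r₁| |f r₂| := (le_abs_self _).trans (le_max_right _ _)
      nlinarith [mul_le_mul_of_nonneg_left e1 ha, mul_le_mul_of_nonneg_left e2 hb]
  -- continuity of f on Icc r₁ r₂
  have hcont : ContinuousOn f (Set.Icc r₁ r₂) := by
    intro t ht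
    rcases lt_or_eq_of_le (le_trans hr₁0 ht.1) with h0t | h0t
    · have : ContinuousAt f t := by
        have hio : ContinuousOn f (Set.Ioi (0:ℝ)) := by
          simpa [interior_Ici] using hf.continuousOn_interior
        exact hio.continuousAt (Ioi_mem_nhds h0t)
      exact this.continuousWithinAt
    · -- t = 0
      rw [← h0t]
      have hsub : Set.Icc r₁ r₂ ⊆ Set.Ici (0:ℝ) := fun y hy => le_trans hr₁0 hy.1
      refine (Filter.Tendsto.mono_left ?_ (nhdsWithin_mono _ hsub) : ContinuousWithinAt f _ 0)
      have : Set.Ici (0:ℝ) = Set.Ioi 0 ∪ {0} := by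
        ext y; simp [le_iff_lt_or_eq, or_comm, eq_comm]
      rw [this, nhdsWithin_union]
      rw [Filter.tendsto_sup]
      refine ⟨hf0, ?_⟩
      rw [nhdsWithin_singleton]
      exact tendsto_pure_nhds f 0
  -- measurable version of the integrand
  have hclamp : Continuous fun t : ℝ => max r₁ (min t r₂) :=
    continuous_const.max (continuous_id.min continuous_const)
  have hmap : ∀ t : ℝ, max r₁ (min t r₂) ∈ Set.Icc r₁ r₂ := by
    intro t
    constructor
    · exact le_max_left _ _
    · exact max_le (by linarith) (min_le_right _ _)
  have hF : Continuous fun t : ℝ => f (max r₁ (min t r₂)) :=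
    hcont.comp_continuous hclamp hmap
  have hGmeas : Measurable fun x => q x * f (max r₁ (min (p x / q x) r₂)) :=
    hq.mul (hF.measurable.comp (hp.div hq))
  have heq : (fun x => q x * f (p x / q x))
      =ᵐ[μ] fun x => q x * f (max r₁ (min (p x / q x) r₂)) := by
    filter_upwards [hae] with x hx
    rw [min_eq_left hx.2.2, max_eq_right hx.2.1]
  -- integrability
  have hInt : Integrable (fun x => q x * f (p x / q x)) μ := by
    refine Integrable.mono' (hqint.const_mul C) (hGmeas.aestronglyMeasurable.congr heq.symm) ?_
    filter_upwards [hae] with x hx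
    rw [Real.norm_eq_abs, abs_mul, abs_of_pos hx.1, mul_comm]
    exact mul_le_mul_of_nonneg_right (hC _ ⟨hx.2.1, hx.2.2⟩) hx.1.le
  have hUint : Integrable
      (fun x => ((r₂ * q x - p x) * f r₁ + (p x - r₁ * q x) * f r₂) / (r₂ - r₁)) μ := by
    apply Integrable.div_const
    exact (((hqint.const_mul r₂).sub hpint).mul_const _).add
      ((hpint.sub (hqint.const_mul r₁)).mul_const _)
  have hle : ∀ᵐ x ∂μ, q x * f (p x / q x) ≤
      ((r₂ * q x - p x) * f r₁ + (p x - r₁ * q x) * f r₂) / (r₂ - r₁) := by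
    filter_upwards [hae] with x hx
    have h1 := hchord _ ⟨hx.2.1, hx.2.2⟩
    have h2 : q x * f (p x / q x) ≤
        q x * ((r₂ - p x / q x) / (r₂ - r₁) * f r₁ + (p x / q x - r₁) / (r₂ - r₁) * f r₂) :=
      mul_le_mul_of_nonneg_left h1 hx.1.le
    have h3 : q x * ((r₂ - p x / q x) / (r₂ - r₁) * f r₁ + (p x / q x - r₁) / (r₂ - r₁) * f r₂)
        = ((r₂ * q x - p x) * f r₁ + (p x - r₁ * q x) * f r₂) / (r₂ - r₁) := by
      have hqne : q x ≠ 0 := hx.1.ne'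
      field_simp
    linarith
  calc ∫ x, q x * f (p x / q x) ∂μ
      ≤ ∫ x, ((r₂ * q x - p x) * f r₁ + (p x - r₁ * q x) * f r₂) / (r₂ - r₁) ∂μ :=
        integral_mono_ae hInt hUint hle
    _ = (1 - r₁) / (r₂ - r₁) * f r₂ + (r₂ - 1) / (r₂ - r₁) * f r₁ := by
        have hint1 : Integrable (fun x => (r₂ * q x - p x) * f r₁) μ :=
          ((hqint.const_mul r₂).sub hpint).mul_const _
        have hint2 : Integrable (fun x => (p x - r₁ * q x) * f r₂) μ :=
          (hpint.sub (hqint.const_mul r₁)).mul_const _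
        have hsub1 : Integrable (fun x => r₂ * q x) μ := hqint.const_mul r₂
        have hsub2 : Integrable (fun x => r₁ * q x) μ := hqint.const_mul r₁
        have hpair : ∫ x, ((r₂ * q x - p x) * f r₁ + (p x - r₁ * q x) * f r₂) ∂μ
            = (r₂ - 1) * f r₁ + (1 - r₁) * f r₂ := by
          rw [integral_add hint1 hint2, integral_mul_const, integral_mul_const,
            integral_sub hsub1 hpint, integral_sub hpint hsub2,
            integral_const_mul, integral_const_mul, hpi, hqi]
          ring
        rw [integral_div, hpair]
        field_simp
        ring
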